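/- Let d ≥ 1 and let x₁, …, x_d, y₁, …, y_{d−1} be 2d − 1 distinct integers. Then in the field ℚ(q) of rational functions, ∑_{k=1}^{d} ( ∏_{i=1, i≠k}^{d} w(x_k − x_i) / ∏_{i=1}^{d−1} w(x_k − y_i) ) + ∑_{k=1}^{d−1} ( ∏_{i=1, i≠k}^{d−1} w(y_k − y_i) / ∏_{i=1}^{d} w(y_k − x_i) ) = 1, where w(h) = (1 + q^h)/(1 − q^h) for a nonzero integer h (q^h being interpreted in ℚ(q) for negative h as well). -/

import Mathlib

open scoped BigOperators

/-- `w h = (1 + q^h) / (1 - q^h)` in `ℚ(q)`, where `q = RatFunc.X` (for negative `h`,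
`q^h` is interpreted via `zpow` in the field `ℚ(q)`). -/
noncomputable def w (h : ℤ) : RatFunc ℚ :=
  (1 + RatFunc.X ^ h) / (1 - RatFunc.X ^ h)

open Polynomial Finset


section helpers
variable {K : Type*} [Field K]

lemma nd_addX (c : K) : (C c + X).natDegree = 1 := by
  rw [add_comm]; exact natDegree_X_add_C c

lemma nd_subX (c : K) : (C c - X).natDegree = 1 := by
  have h : C c - X = -(X - C c) := by ring
  rw [h, natDegree_neg, natDegree_X_sub_C]

lemma lc_addX (c : K) : (C c + X).leadingCoeff = 1 := by
  rw [add_comm]; exact (monic_X_add_C c)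

lemma lc_subX (c : K) : (C c - X).leadingCoeff = -1 := by
  have h : C c - X = -(X - C c) := by ring
  rw [h, leadingCoeff_neg, (monic_X_sub_C c).leadingCoeff]

lemma ne0_addX (c : K) : (C c + X) ≠ 0 := by
  intro h
  have := nd_addX c
  rw [h, natDegree_zero] at this
  exact absurd this one_ne_zero.symm

lemma ne0_subX (c : K) : (C c - X) ≠ 0 := by
  intro h
  have := nd_subX c
  rw [h, natDegree_zero] at this
  exact absurd this one_ne_zero.symm

end helpers

theorem key {K : Type*} [Field K] (n : ℕ) (t : Fin (n + 1) → K) (s : Fin n → K)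
    (h0t : ∀ i, t i ≠ 0) (h0s : ∀ j, s j ≠ 0)
    (htt : Function.Injective t) (hss : Function.Injective s)
    (htt' : ∀ i j, t i + t j ≠ 0) (hss' : ∀ i j, s i + s j ≠ 0)
    (hts' : ∀ i j, t i + s j ≠ 0) (hts : ∀ i j, t i ≠ s j) :
    (∑ k, (∏ i ∈ univ.erase k, (t i + t k) / (t i - t k)) /
        ∏ j, (s j + t k) / (s j - t k)) +
      (∑ k, (∏ l ∈ univ.erase k, (s l + s k) / (s l - s k)) /
        ∏ i, (t i + s k) / (t i - s k)) = 1 := by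
  classical
  have htt0 : ∀ i k : Fin (n + 1), i ≠ k → t i - t k ≠ 0 :=
    fun i k h => sub_ne_zero.2 fun e => h (htt e)
  have hss0 : ∀ i k : Fin n, i ≠ k → s i - s k ≠ 0 :=
    fun i k h => sub_ne_zero.2 fun e => h (hss e)
  have hst0 : ∀ (j : Fin n) (k : Fin (n + 1)), s j - t k ≠ 0 :=
    fun j k => sub_ne_zero.2 fun e => hts k j e.symm
  have hts0 : ∀ (i : Fin (n + 1)) (j : Fin n), t i - s j ≠ 0 :=
    fun i j => sub_ne_zero.2 (hts i j)
  set N : K[X] := (∏ i, (C (t i) + X)) * ∏ j, (C (s j) - X) with hN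
  set Q : K[X] := (∏ i, (C (t i) - X)) * ∏ j, (C (s j) + X) with hQ
  set P : Fin (n + 1) → K[X] :=
    fun k => (∏ i ∈ univ.erase k, (C (t i) - X)) * ∏ j, (C (s j) + X) with hP
  set R : Fin n → K[X] :=
    fun k => (∏ i, (C (t i) - X)) * ∏ l ∈ univ.erase k, (C (s l) + X) with hR
  set a : Fin (n + 1) → K := fun k =>
    ((∏ i, (t i + t k)) * ∏ j, (s j - t k)) /
      ((∏ i ∈ univ.erase k, (t i - t k)) * ∏ j, (s j + t k)) with ha
  set b : Fin n → K := fun k =>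
    ((∏ i, (t i - s k)) * ∏ l, (s l + s k)) /
      ((∏ i, (t i + s k)) * ∏ l ∈ univ.erase k, (s l - s k)) with hb
  set D : K[X] := N + Q - (∑ k, C (a k) * P k) - (∑ k, C (b k) * R k) with hD
  have hdenA : ∀ k, (∏ i ∈ univ.erase k, (t i - t k)) * (∏ j, (s j + t k)) ≠ 0 := by
    intro k
    refine mul_ne_zero (prod_ne_zero_iff.2 fun i hi => htt0 i k (mem_erase.1 hi).1) ?_
    exact prod_ne_zero_iff.2 fun j _ => by rw [add_comm]; exact hts' k j
  have hdenB : ∀ k, (∏ i, (t i + s k)) * (∏ l ∈ univ.erase k, (s l - s k)) ≠ 0 := by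
    intro k
    refine mul_ne_zero (prod_ne_zero_iff.2 fun i _ => hts' i k) ?_
    exact prod_ne_zero_iff.2 fun l hl => hss0 l k (mem_erase.1 hl).1
  have haeq : ∀ k, a k * ((∏ i ∈ univ.erase k, (t i - t k)) * ∏ j, (s j + t k)) =
      (∏ i, (t i + t k)) * ∏ j, (s j - t k) := fun k => div_mul_cancel₀ _ (hdenA k)
  have hbeq : ∀ k, b k * ((∏ i, (t i + s k)) * ∏ l ∈ univ.erase k, (s l - s k)) =
      (∏ i, (t i - s k)) * ∏ l, (s l + s k) := fun k => div_mul_cancel₀ _ (hdenB k)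
  -- evaluation at t k
  have hDt : ∀ k, D.eval (t k) = 0 := by
    intro k
    rw [hD, hN, hQ]
    simp only [hP, hR, eval_sub, eval_add, eval_mul, eval_prod, eval_finset_sum, eval_C, eval_X]
    have z1 : (∏ i, (t i - t k)) = 0 := prod_eq_zero (mem_univ k) (sub_self _)
    rw [Finset.sum_eq_single_of_mem k (mem_univ k) (fun m _ hmk => by
      have z2 : (∏ x ∈ univ.erase m, (t x - t k)) = 0 :=
        prod_eq_zero (mem_erase.2 ⟨Ne.symm hmk, mem_univ k⟩) (sub_self _)
      rw [z2]; ring)]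
    simp only [z1, zero_mul, mul_zero, sum_const_zero]
    rw [haeq k]; ring
  -- evaluation at -(s k)
  have hDs : ∀ k, D.eval (-(s k)) = 0 := by
    intro k
    rw [hD, hN, hQ]
    simp only [hP, hR, eval_sub, eval_add, eval_mul, eval_prod, eval_finset_sum, eval_C, eval_X,
      sub_neg_eq_add, ← sub_eq_add_neg]
    have z1 : (∏ l, (s l - s k)) = 0 := prod_eq_zero (mem_univ k) (sub_self _)
    rw [Finset.sum_eq_single_of_mem k (mem_univ k) (fun m _ hmk => by
      have z2 : (∏ x ∈ univ.erase m, (s x - s k)) = 0 :=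
        prod_eq_zero (mem_erase.2 ⟨Ne.symm hmk, mem_univ k⟩) (sub_self _)
      rw [z2]; ring)]
    simp only [z1, zero_mul, mul_zero, sum_const_zero]
    rw [hbeq k]; ring
    -- degrees and leading coefficients
  have hndN : N.natDegree = 2 * n + 1 := by
    rw [hN, natDegree_mul (prod_ne_zero_iff.2 fun i _ => ne0_addX _)
        (prod_ne_zero_iff.2 fun j _ => ne0_subX _),
      natDegree_prod _ _ (fun i _ => ne0_addX _), natDegree_prod _ _ (fun j _ => ne0_subX _)]
    simp [nd_addX, nd_subX]
    omega
  have hndQ : Q.natDegree = 2 * n + 1 := by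
    rw [hQ, natDegree_mul (prod_ne_zero_iff.2 fun i _ => ne0_subX _)
        (prod_ne_zero_iff.2 fun j _ => ne0_addX _),
      natDegree_prod _ _ (fun i _ => ne0_subX _), natDegree_prod _ _ (fun j _ => ne0_addX _)]
    simp [nd_addX, nd_subX]
    omega
  have hcN : N.coeff (2 * n + 1) = (-1) ^ n := by
    have h1 : N.leadingCoeff = (-1) ^ n := by
      rw [hN, leadingCoeff_mul, leadingCoeff_prod, leadingCoeff_prod]
      simp [lc_addX, lc_subX]
    rwa [Polynomial.leadingCoeff, hndN] at h1
  have hcQ : Q.coeff (2 * n + 1) = (-1) ^ (n + 1) := by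
    have h1 : Q.leadingCoeff = (-1) ^ (n + 1) := by
      rw [hQ, leadingCoeff_mul, leadingCoeff_prod, leadingCoeff_prod]
      simp [lc_addX, lc_subX]
    rwa [Polynomial.leadingCoeff, hndQ] at h1
  have hNQ : (N + Q).natDegree ≤ 2 * n := by
    rw [natDegree_le_iff_coeff_eq_zero]
    intro m hm
    rw [coeff_add]
    rcases eq_or_lt_of_le (Nat.succ_le_of_lt hm) with h | h
    · rw [← h, hcN, hcQ]; ring
    · rw [coeff_eq_zero_of_natDegree_lt (by omega : N.natDegree < m),
        coeff_eq_zero_of_natDegree_lt (by omega : Q.natDegree < m), add_zero]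
  have hPdeg : ∀ k, (C (a k) * P k).natDegree ≤ 2 * n := by
    intro k
    refine (natDegree_C_mul_le _ _).trans ?_
    simp only [hP]
    refine natDegree_mul_le.trans ?_
    have h1 : (∏ i ∈ univ.erase k, (C (t i) - X)).natDegree ≤ n := by
      refine (natDegree_prod_le _ _).trans ?_
      simp [nd_subX, Finset.card_erase_of_mem]
    have h2 : (∏ j, (C (s j) + X)).natDegree ≤ n := by
      refine (natDegree_prod_le _ _).trans ?_
      simp [nd_addX]
    omega
  have hRdeg : ∀ k, (C (b k) * R k).natDegree ≤ 2 * n := by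
    intro k
    refine (natDegree_C_mul_le _ _).trans ?_
    simp only [hR]
    refine natDegree_mul_le.trans ?_
    have h1 : (∏ i, (C (t i) - X)).natDegree ≤ n + 1 := by
      refine (natDegree_prod_le _ _).trans ?_
      simp [nd_subX]
    have h2 : (∏ l ∈ univ.erase k, (C (s l) + X)).natDegree ≤ n - 1 := by
      refine (natDegree_prod_le _ _).trans ?_
      simp [nd_addX, Finset.card_erase_of_mem]
    have := k.pos
    omega
  have hDdeg : D.natDegree ≤ 2 * n := by
    rw [hD]
    refine (natDegree_sub_le _ _).trans (max_le ((natDegree_sub_le _ _).trans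
      (max_le hNQ (natDegree_sum_le_of_forall_le _ _ fun k _ => hPdeg k)))
      (natDegree_sum_le_of_forall_le _ _ fun k _ => hRdeg k))
  have hD0 : D = 0 := by
    refine Polynomial.eq_zero_of_natDegree_lt_card_of_eval_eq_zero D
      (f := Sum.elim t fun j => -(s j)) ?_ ?_ ?_
    · rintro (i | i) (j | j) h <;> simp only [Sum.elim_inl, Sum.elim_inr] at h
      · exact congrArg Sum.inl (htt h)
      · exact absurd (by rw [h]; ring) (hts' i j)
      · exact absurd (by rw [← h]; ring) (hts' j i)
      · exact congrArg Sum.inr (hss (neg_injective h))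
    · rintro (i | i)
      · exact hDt i
      · exact hDs i
    · have : Fintype.card (Fin (n + 1) ⊕ Fin n) = 2 * n + 1 := by
        simp [Fintype.card_sum]; omega
      omega
  -- evaluate at 0
  have hE : (∑ k, a k * ((∏ i ∈ univ.erase k, t i) * ∏ j, s j)) +
      (∑ k, b k * ((∏ i, t i) * ∏ l ∈ univ.erase k, s l)) =
      2 * ((∏ i, t i) * ∏ j, s j) := by
    have h0 := congrArg (eval 0) hD0
    rw [hD] at h0
    simp only [hN, hQ, hP, hR, eval_sub, eval_add, eval_mul, eval_prod, eval_finset_sum,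
      eval_C, eval_X, eval_zero, add_zero, sub_zero] at h0
    linear_combination -h0
  -- rewrite the summands
  have hTa : ∀ k, (∏ i ∈ univ.erase k, (t i + t k) / (t i - t k)) /
      (∏ j, (s j + t k) / (s j - t k)) = a k / (t k + t k) := by
    intro k
    rw [prod_div_distrib, prod_div_distrib]
    simp only [ha]
    rw [← Finset.mul_prod_erase univ (fun i => t i + t k) (mem_univ k)]
    have e1 : t k + t k ≠ 0 := htt' k k
    have e2 : (∏ i ∈ univ.erase k, (t i - t k)) ≠ 0 :=
      prod_ne_zero_iff.2 fun i hi => htt0 i k (mem_erase.1 hi).1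
    have e3 : (∏ j, (s j + t k)) ≠ 0 :=
      prod_ne_zero_iff.2 fun j _ => by rw [add_comm]; exact hts' k j
    have e4 : (∏ j, (s j - t k)) ≠ 0 := prod_ne_zero_iff.2 fun j _ => hst0 j k
    have h2' : (2 : K) ≠ 0 := fun h => e1 (by rw [← two_mul, h, zero_mul])
    field_simp
    ring_nf
    rw [inv_mul_cancel_right₀ h2', mul_comm (t k), mul_inv_cancel_right₀ (h0t k)]
    exact Finset.prod_congr rfl fun _ _ => add_comm _ _
  have hTb : ∀ k, (∏ l ∈ univ.erase k, (s l + s k) / (s l - s k)) /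
      (∏ i, (t i + s k) / (t i - s k)) = b k / (s k + s k) := by
    intro k
    rw [prod_div_distrib, prod_div_distrib]
    simp only [hb]
    rw [← Finset.mul_prod_erase univ (fun l => s l + s k) (mem_univ k)]
    have e1 : s k + s k ≠ 0 := hss' k k
    have e2 : (∏ l ∈ univ.erase k, (s l - s k)) ≠ 0 :=
      prod_ne_zero_iff.2 fun l hl => hss0 l k (mem_erase.1 hl).1
    have e3 : (∏ i, (t i + s k)) ≠ 0 := prod_ne_zero_iff.2 fun i _ => hts' i k
    have e4 : (∏ i, (t i - s k)) ≠ 0 := prod_ne_zero_iff.2 fun i _ => hts0 i k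
    have h2' : (2 : K) ≠ 0 := fun h => e1 (by rw [← two_mul, h, zero_mul])
    field_simp
    ring_nf
    rw [inv_mul_cancel_right₀ h2', mul_comm (s k), mul_inv_cancel_right₀ (h0s k)]
    exact Finset.prod_congr rfl fun _ _ => add_comm _ _
  rw [Finset.sum_congr rfl fun k _ => hTa k, Finset.sum_congr rfl fun k _ => hTb k]
  have hprodt : (∏ i, t i) ≠ 0 := prod_ne_zero_iff.2 fun i _ => h0t i
  have hprods : (∏ j, s j) ≠ 0 := prod_ne_zero_iff.2 fun j _ => h0s j
  have h2 : (2 : K) ≠ 0 := by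
    intro h
    exact htt' 0 0 (by rw [← two_mul, h, zero_mul])
  have hden : 2 * ((∏ i, t i) * ∏ j, s j) ≠ 0 := mul_ne_zero h2 (mul_ne_zero hprodt hprods)
  have step : ∀ k : Fin (n + 1), a k / (t k + t k) =
      a k * ((∏ i ∈ univ.erase k, t i) * ∏ j, s j) / (2 * ((∏ i, t i) * ∏ j, s j)) := by
    intro k
    rw [← Finset.mul_prod_erase univ t (mem_univ k)]
    have e0 := h0t k
    have e1 : t k + t k ≠ 0 := htt' k k
    have e : (∏ i ∈ univ.erase k, t i) ≠ 0 := prod_ne_zero_iff.2 fun i _ => h0t i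
    have h2' : (2 : K) ≠ 0 := h2
    field_simp
    ring_nf
    exact inv_mul_cancel_right₀ h2' _
  have stepb : ∀ k : Fin n, b k / (s k + s k) =
      b k * ((∏ i, t i) * ∏ l ∈ univ.erase k, s l) / (2 * ((∏ i, t i) * ∏ j, s j)) := by
    intro k
    rw [← Finset.mul_prod_erase univ s (mem_univ k)]
    have e0 := h0s k
    have e1 : s k + s k ≠ 0 := hss' k k
    have e : (∏ l ∈ univ.erase k, s l) ≠ 0 := prod_ne_zero_iff.2 fun l _ => h0s l
    have h2' : (2 : K) ≠ 0 := h2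
    field_simp
    ring_nf
    exact inv_mul_cancel_right₀ h2' _
  rw [Finset.sum_congr rfl fun k _ => step k, Finset.sum_congr rfl fun k _ => stepb k,
    ← Finset.sum_div, ← Finset.sum_div, ← add_div, hE]
  exact div_self hden

lemma Xz_ne (c : ℤ) : (RatFunc.X : RatFunc ℚ) ^ c ≠ 0 :=
  zpow_ne_zero _ RatFunc.X_ne_zero

lemma Xn_ne_one (m : ℕ) (hm : m ≠ 0) : (RatFunc.X : RatFunc ℚ) ^ m ≠ 1 := by
  intro h
  have h2 : (Polynomial.X : ℚ[X]) ^ m = 1 := by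
    apply RatFunc.algebraMap_injective ℚ
    rw [map_pow, map_one, RatFunc.algebraMap_X]
    exact h
  have := congrArg natDegree h2
  rw [natDegree_X_pow, natDegree_one] at this
  exact hm this

lemma Xzpow_eq_one {c : ℤ} (h : (RatFunc.X : RatFunc ℚ) ^ c = 1) : c = 0 := by
  rcases lt_trichotomy c 0 with hc | hc | hc
  · have h' : (RatFunc.X : RatFunc ℚ) ^ (-c) = 1 := by rw [zpow_neg, h, inv_one]
    lift -c to ℕ using (by omega) with m hm
    rw [zpow_natCast] at h'
    exact absurd h' (Xn_ne_one m (by omega))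
  · exact hc
  · lift c to ℕ using hc.le with m hm
    rw [zpow_natCast] at h
    exact absurd h (Xn_ne_one m (by omega))

lemma Xz_inj (a b : ℤ) (h : (RatFunc.X : RatFunc ℚ) ^ a = (RatFunc.X : RatFunc ℚ) ^ b) :
    a = b := by
  have h1 : (RatFunc.X : RatFunc ℚ) ^ (a - b) = 1 := by
    rw [zpow_sub₀ RatFunc.X_ne_zero, h, div_self (Xz_ne b)]
  have := Xzpow_eq_one h1
  omega

lemma Xz_add_ne (a b : ℤ) : (RatFunc.X : RatFunc ℚ) ^ a + (RatFunc.X : RatFunc ℚ) ^ b ≠ 0 := by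
  intro h
  have h1 : (RatFunc.X : RatFunc ℚ) ^ (a - b) = -1 := by
    rw [zpow_sub₀ RatFunc.X_ne_zero, div_eq_iff (Xz_ne b)]
    linear_combination h
  have h2 : (RatFunc.X : RatFunc ℚ) ^ (a - b + (a - b)) = 1 := by
    rw [zpow_add₀ RatFunc.X_ne_zero, h1]
    ring
  have hab : a = b := by have := Xzpow_eq_one h2; omega
  subst hab
  haveI : CharZero (RatFunc ℚ) :=
    charZero_of_injective_algebraMap (RatFunc.algebraMap_injective ℚ)
  have h3 : (2 : RatFunc ℚ) * (RatFunc.X : RatFunc ℚ) ^ a = 0 := by linear_combination h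
  rcases mul_eq_zero.1 h3 with h' | h'
  · exact two_ne_zero h'
  · exact Xz_ne a h'

lemma w_eq (a b : ℤ) (hab : a ≠ b) :
    w (a - b) = ((RatFunc.X : RatFunc ℚ) ^ b + (RatFunc.X : RatFunc ℚ) ^ a) /
      ((RatFunc.X : RatFunc ℚ) ^ b - (RatFunc.X : RatFunc ℚ) ^ a) := by
  have hX : (RatFunc.X : RatFunc ℚ) ≠ 0 := RatFunc.X_ne_zero
  have hb : (RatFunc.X : RatFunc ℚ) ^ b ≠ 0 := Xz_ne b
  have hne : (RatFunc.X : RatFunc ℚ) ^ b - (RatFunc.X : RatFunc ℚ) ^ a ≠ 0 :=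
    sub_ne_zero.2 fun e => hab (Xz_inj b a e).symm
  rw [w, zpow_sub₀ hX]
  rw [show (1 : RatFunc ℚ) + RatFunc.X ^ a / RatFunc.X ^ b =
      (RatFunc.X ^ b + RatFunc.X ^ a) / RatFunc.X ^ b by field_simp,
    show (1 : RatFunc ℚ) - RatFunc.X ^ a / RatFunc.X ^ b =
      (RatFunc.X ^ b - RatFunc.X ^ a) / RatFunc.X ^ b by field_simp]
  rw [div_div_div_comm, div_self hb, div_one]


/-- Proposition: for `2d − 1` distinct integers `x₁, …, x_d, y₁, …, y_{d−1}`,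
`∑ₖ (∏_{i≠k} w(xₖ−xᵢ) / ∏ᵢ w(xₖ−yᵢ)) + ∑ₖ (∏_{i≠k} w(yₖ−yᵢ) / ∏ᵢ w(yₖ−xᵢ)) = 1`
in `ℚ(q)`. -/
theorem content_identity (d : ℕ) (hd : 1 ≤ d) (x : Fin d → ℤ) (y : Fin (d - 1) → ℤ)
    (hdist : Function.Injective (Sum.elim x y : Fin d ⊕ Fin (d - 1) → ℤ)) :
    (∑ k : Fin d,
        (∏ i ∈ Finset.univ.erase k, w (x k - x i)) / ∏ i : Fin (d - 1), w (x k - y i)) +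
      (∑ k : Fin (d - 1),
        (∏ i ∈ Finset.univ.erase k, w (y k - y i)) / ∏ i : Fin d, w (y k - x i)) = 1 := by
  obtain ⟨n, rfl⟩ : ∃ n, d = n + 1 := ⟨d - 1, by omega⟩
  have hx : Function.Injective x := fun i j h =>
    Sum.inl.inj (hdist (show Sum.elim x y (Sum.inl i) = Sum.elim x y (Sum.inl j) from h))
  have hy : Function.Injective y := fun i j h =>
    Sum.inr.inj (hdist (show Sum.elim x y (Sum.inr i) = Sum.elim x y (Sum.inr j) from h))
  have hxy : ∀ (i : Fin (n + 1)) (j : Fin (n + 1 - 1)), x i ≠ y j := fun i j h => by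
    simpa using hdist (show Sum.elim x y (Sum.inl i) = Sum.elim x y (Sum.inr j) from h)
  have hkey := key n (fun i => (RatFunc.X : RatFunc ℚ) ^ x i)
      (fun j : Fin n => (RatFunc.X : RatFunc ℚ) ^ y j)
      (fun i => Xz_ne _) (fun j => Xz_ne _)
      (fun i j h => hx (Xz_inj _ _ h)) (fun i j h => hy (Xz_inj _ _ h))
      (fun i j => Xz_add_ne _ _) (fun i j => Xz_add_ne _ _) (fun i j => Xz_add_ne _ _)
      (fun i j h => hxy i j (Xz_inj _ _ h))
  have E1 : (∑ k : Fin (n + 1),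
      (∏ i ∈ Finset.univ.erase k, w (x k - x i)) / ∏ j : Fin (n + 1 - 1), w (x k - y j)) =
      ∑ k : Fin (n + 1),
        (∏ i ∈ Finset.univ.erase k,
          ((RatFunc.X : RatFunc ℚ) ^ x i + (RatFunc.X : RatFunc ℚ) ^ x k) /
            ((RatFunc.X : RatFunc ℚ) ^ x i - (RatFunc.X : RatFunc ℚ) ^ x k)) /
        ∏ j : Fin (n + 1 - 1),
          ((RatFunc.X : RatFunc ℚ) ^ y j + (RatFunc.X : RatFunc ℚ) ^ x k) /
            ((RatFunc.X : RatFunc ℚ) ^ y j - (RatFunc.X : RatFunc ℚ) ^ x k) := by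
    refine Finset.sum_congr rfl fun k _ => ?_
    congr 1
    · exact Finset.prod_congr rfl fun i hi =>
        w_eq _ _ fun e => (Finset.mem_erase.1 hi).1 (hx e).symm
    · exact Finset.prod_congr rfl fun j _ => w_eq _ _ (hxy k j)
  have E2 : (∑ k : Fin (n + 1 - 1),
      (∏ i ∈ Finset.univ.erase k, w (y k - y i)) / ∏ i : Fin (n + 1), w (y k - x i)) =
      ∑ k : Fin (n + 1 - 1),
        (∏ l ∈ Finset.univ.erase k,
          ((RatFunc.X : RatFunc ℚ) ^ y l + (RatFunc.X : RatFunc ℚ) ^ y k) /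
            ((RatFunc.X : RatFunc ℚ) ^ y l - (RatFunc.X : RatFunc ℚ) ^ y k)) /
        ∏ i : Fin (n + 1),
          ((RatFunc.X : RatFunc ℚ) ^ x i + (RatFunc.X : RatFunc ℚ) ^ y k) /
            ((RatFunc.X : RatFunc ℚ) ^ x i - (RatFunc.X : RatFunc ℚ) ^ y k) := by
    refine Finset.sum_congr rfl fun k _ => ?_
    congr 1
    · exact Finset.prod_congr rfl fun l hl =>
        w_eq _ _ fun e => (Finset.mem_erase.1 hl).1 (hy e).symm
    · exact Finset.prod_congr rfl fun i _ => w_eq _ _ fun e => hxy i k e.symm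
  rw [E1, E2]
  exact hkey
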